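/- Let A be a group such that C(A) = C_q(A) and such that S_A G = T_A G for every group G. Then C(A) = C̄(A): the smallest class containing A closed under isomorphisms and direct limits coincides with the smallest class containing A closed under isomorphisms, direct limits and extensions. -/

import Mathlib

open CategoryTheory Limits

universe u v

/-- A class of groups closed under isomorphisms. -/
def IsoClosed (C : GrpCat.{u} → Prop) : Prop :=
  ∀ ⦃G H : GrpCat.{u}⦄, (G ≅ H) → C G → C H

/-- A class of groups is closed under direct limits if it contains the colimit
(computed in the category of groups) of every small diagram all of whose
objects belong to the class. -/
def ColimClosed (C : GrpCat.{u} → Prop) : Prop :=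
  ∀ (J : Type u) [SmallCategory J] (F : J ⥤ GrpCat.{u}) (c : Cocone F),
    IsColimit c → (∀ j, C (F.obj j)) → C c.pt

/-- A class of groups is closed under quotients if it contains the image of
every surjective homomorphism out of one of its members. -/
def QuotClosed (C : GrpCat.{u} → Prop) : Prop :=
  ∀ (G Q : GrpCat.{u}) (π : (G : Type u) →* Q),
    Function.Surjective π → C G → C Q

/-- A class of groups is closed under extensions if whenever
`1 → N → G → Q → 1` is a short exact sequence with `N` and `Q` in the class,
then `G` is in the class. -/
def ExtClosed (C : GrpCat.{u} → Prop) : Prop :=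
  ∀ (N G Q : GrpCat.{u}) (ι : (N : Type u) →* G) (π : (G : Type u) →* Q),
    Function.Injective ι → Function.Surjective π → ι.range = π.ker →
    C N → C Q → C G

/-- `C(A)`: the smallest class of groups containing `A` and closed under
isomorphisms and direct limits. -/
def cellClass (A G : GrpCat.{u}) : Prop :=
  ∀ C : GrpCat.{u} → Prop, IsoClosed C → ColimClosed C → C A → C G

/-- `C̄(A)`: the smallest class of groups containing `A` and closed under
isomorphisms, direct limits and extensions. -/
def acyclClass (A G : GrpCat.{u}) : Prop :=
  ∀ C : GrpCat.{u} → Prop, IsoClosed C → ColimClosed C → ExtClosed C → C A → C G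

/-- `C_q(A)`: the smallest class of groups containing `A` and closed under
isomorphisms, direct limits and quotients. -/
def socClass (A G : GrpCat.{u}) : Prop :=
  ∀ C : GrpCat.{u} → Prop, IsoClosed C → ColimClosed C → QuotClosed C → C A → C G

/-- The `A`-socle `S_A G` of `G`: the subgroup of `G` generated by the images
of all homomorphisms `A →* G`. -/
def socle (A : Type u) [Group A] (G : Type v) [Group G] : Subgroup G :=
  ⨆ f : A →* G, f.range

/-- The `A`-radical `T_A G` of `G`: the smallest normal subgroup `N` of `G`
such that every homomorphism from `A` to `G ⧸ N` is trivial. -/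
def radical (A : Type u) [Group A] (G : Type v) [Group G] : Subgroup G :=
  sInf {N : Subgroup G | ∃ _ : N.Normal, ∀ f : A →* G ⧸ N, f = 1}

/-- View a `Grp`-morphism as a `MonoidHom`. -/
abbrev grpHom {G H : GrpCat.{u}} (f : G ⟶ H) : (G : Type u) →* (H : Type u) := f.hom

section aux

variable {A : Type u} [Group A]

/-- Pushing the socle forward along a homomorphism lands in the socle. -/
lemma socle_map_le {G : Type u} {H : Type u} [Group G] [Group H] (h : G →* H) :
    Subgroup.map h (socle A G) ≤ socle A H := by
  rw [socle, Subgroup.map_le_iff_le_comap]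
  refine iSup_le fun f => ?_
  rw [← Subgroup.map_le_iff_le_comap, ← MonoidHom.range_comp]
  exact le_iSup (fun g : A →* H => g.range) (h.comp f)

lemma socle_eq_top_of_surjective {G H : Type u} [Group G] [Group H] (h : G →* H)
    (hs : Function.Surjective h) (hG : socle A G = ⊤) : socle A H = ⊤ := by
  have : Subgroup.map h ⊤ ≤ socle A H := hG ▸ socle_map_le h
  rwa [Subgroup.map_top_of_surjective h hs, top_le_iff] at this

instance radical_normal {G : Type v} [Group G] : (radical A G).Normal := by
  constructor
  intro x hx g
  rw [radical, Subgroup.mem_sInf] at hx ⊢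
  intro N hN
  obtain ⟨hNnorm, -⟩ := id hN
  exact hNnorm.conj_mem x (hx N hN) g

lemma hom_to_quotient_radical_trivial {G : Type u} [Group G]
    (f : A →* G ⧸ radical A G) : f = 1 := by
  ext a
  obtain ⟨g, hg⟩ := QuotientGroup.mk_surjective (f a)
  have hg' : g ∈ radical A G := by
    rw [radical, Subgroup.mem_sInf]
    intro N hN
    have hle : radical A G ≤ N := sInf_le hN
    obtain ⟨hNnorm, hNf⟩ := id hN
    let θ : G ⧸ radical A G →* G ⧸ N :=
      QuotientGroup.map (radical A G) N (MonoidHom.id G) (fun x hx => hle hx)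
    have h1 := congrArg (fun h : A →* G ⧸ N => h a) (hNf (θ.comp f))
    simp only [MonoidHom.comp_apply, MonoidHom.one_apply] at h1
    rw [← hg] at h1
    exact (QuotientGroup.eq_one_iff g).mp h1
  show f a = 1
  rw [← hg]
  exact (QuotientGroup.eq_one_iff g).mpr hg'

end aux

open CategoryTheory Limits in
/-- The cocone point of a colimit cocone is generated by the images of the
structure maps. -/
lemma iSup_range_cocone_eq_top {J : Type u} [SmallCategory J] (F : J ⥤ GrpCat.{u})
    (c : Cocone F) (hc : IsColimit c) :
    (⨆ j, MonoidHom.range (grpHom (c.ι.app j))) = ⊤ := by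
  set K : Subgroup (c.pt : Type u) :=
    ⨆ j, MonoidHom.range (grpHom (c.ι.app j)) with hK
  have hmem : ∀ (j : J) (x : F.obj j), (grpHom (c.ι.app j)) x ∈ K := by
    intro j x
    exact le_iSup (fun j => MonoidHom.range (grpHom (c.ι.app j))) j
      ⟨x, rfl⟩
  let c' : Cocone F :=
    { pt := GrpCat.of K
      ι :=
        { app := fun j =>
            (GrpCat.ofHom ((grpHom (c.ι.app j)).codRestrict K (hmem j)) :
              F.obj j ⟶ GrpCat.of K)
          naturality := by
            intro j j' u
            ext x
            apply Subtype.ext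
            show (grpHom (c.ι.app j')) ((F.map u) x)
              = (grpHom (c.ι.app j)) x
            calc (grpHom (c.ι.app j')) ((F.map u) x)
                = (F.map u ≫ c.ι.app j') x := rfl
              _ = (grpHom (c.ι.app j)) x := by rw [c.w u] } }
  have hdesc : ∀ j, c.ι.app j ≫ hc.desc c' = c'.ι.app j := fun j => hc.fac c' j
  have huniq : hc.desc c' ≫ (GrpCat.ofHom K.subtype : GrpCat.of K ⟶ c.pt) = 𝟙 c.pt := by
    apply hc.hom_ext
    intro j
    rw [← Category.assoc, hdesc j]
    ext x
    rfl
  rw [← top_le_iff]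
  intro x _
  have hx : (GrpCat.ofHom K.subtype : GrpCat.of K ⟶ c.pt) ((grpHom (hc.desc c')) x)
      = x :=
    congrArg (fun f : c.pt ⟶ c.pt => grpHom f x) huniq
  rw [← hx]
  exact ((grpHom (hc.desc c')) x).2

open CategoryTheory Limits in
lemma socle_eq_top_of_cellClass (A G : GrpCat.{u}) (h : cellClass A G) :
    socle (A : Type u) (G : Type u) = ⊤ := by
  refine h (fun H => socle (A : Type u) (H : Type u) = ⊤) ?_ ?_ ?_
  · intro G H e hG
    refine socle_eq_top_of_surjective (grpHom e.hom) (fun y => ?_) hG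
    exact ⟨(grpHom e.inv) y,
      congrArg (fun f : H ⟶ H => grpHom f y) e.inv_hom_id⟩
  · intro J _ F c hc hobj
    show socle (A : Type u) (c.pt : Type u) = ⊤
    have h1 := iSup_range_cocone_eq_top F c hc
    rw [← top_le_iff, ← h1]
    refine iSup_le fun j => ?_
    have h2 : MonoidHom.range (grpHom (c.ι.app j))
        = Subgroup.map (grpHom (c.ι.app j))
            (socle (A : Type u) (F.obj j : Type u)) := by
      rw [hobj j, ← MonoidHom.range_eq_map]
    rw [h2]
    exact socle_map_le _
  · show socle (A : Type u) (A : Type u) = ⊤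
    rw [← top_le_iff]
    intro x _
    exact le_iSup (fun f : (A : Type u) →* A => f.range) (MonoidHom.id A) ⟨x, rfl⟩

open CategoryTheory Limits Monoid in
lemma socClass_of_socle_eq_top (A G : GrpCat.{u})
    (h : socle (A : Type u) (G : Type u) = ⊤) : socClass A G := by
  intro C hiso hcolim hquot hA
  -- free product of copies of A indexed by homs A →* G
  let I : Type u := (A : Type u) →* G
  let P : GrpCat.{u} := GrpCat.of (CoprodI (fun _ : I => (A : Type u)))
  let s : Cofan (fun _ : I => A) :=
    Cofan.mk P (fun i : I => GrpCat.ofHom (CoprodI.of (M := fun _ : I => (A : Type u)) (i := i)))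
  have hs : IsColimit s := by
    refine mkCofanColimit s
      (fun t => (GrpCat.ofHom (CoprodI.lift (M := fun _ : I => (A : Type u))
        (fun i : I => (grpHom (t.inj i)))) : P ⟶ t.pt)) (fun t i => ?_) (fun t m hm => ?_)
    · ext a
      exact CoprodI.lift_of (M := fun _ : I => (A : Type u)) (fun i : I => grpHom (t.inj i)) a
    · refine GrpCat.hom_ext (CoprodI.ext_hom (M := fun _ : I => (A : Type u)) _ _ (fun i => ?_))
      ext a
      have h3 := congrArg (fun f : A ⟶ t.pt => grpHom f a) (hm i)
      refine h3.trans ?_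
      show grpHom (t.inj i) a = _
      exact (CoprodI.lift_of (M := fun _ : I => (A : Type u)) (fun i : I => grpHom (t.inj i)) a).symm
  have hP : C P :=
    hcolim (Discrete I) (Discrete.functor (fun _ : I => A)) s hs (fun j => hA)
  let π : (P : Type u) →* G := CoprodI.lift (M := fun _ : I => (A : Type u)) (fun f : I => f)
  refine hquot P G π ?_ hP
  rw [← MonoidHom.range_eq_top, ← top_le_iff, ← h]
  refine iSup_le fun f => ?_
  rintro x ⟨a, ha⟩
  exact ⟨CoprodI.of (M := fun _ : I => (A : Type u)) (i := f) a, by rw [← ha]; exact CoprodI.lift_of (M := fun _ : I => (A : Type u)) _ a⟩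

lemma cellClass_iff_socle (A : GrpCat.{u})
    (h1 : ∀ G : GrpCat.{u}, cellClass A G ↔ socClass A G) (G : GrpCat.{u}) :
    cellClass A G ↔ socle (A : Type u) (G : Type u) = ⊤ := by
  constructor
  · exact socle_eq_top_of_cellClass A G
  · intro h
    exact (h1 G).mpr (socClass_of_socle_eq_top A G h)

lemma socle_ext (A : GrpCat.{u})
    (h2 : ∀ G : GrpCat.{u},
      socle (A : Type u) (G : Type u) = radical (A : Type u) (G : Type u))
    (N G Q : GrpCat.{u}) (ι : (N : Type u) →* G) (π : (G : Type u) →* Q)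
    (hπ : Function.Surjective π) (hrk : ι.range = π.ker)
    (hN : socle (A : Type u) (N : Type u) = ⊤)
    (hQ : socle (A : Type u) (Q : Type u) = ⊤) :
    socle (A : Type u) (G : Type u) = ⊤ := by
  set K : Subgroup (G : Type u) := radical (A : Type u) (G : Type u) with hKdef
  have hsoc : socle (A : Type u) (G : Type u) = K := h2 G
  haveI : K.Normal := radical_normal
  let φ : (G : Type u) →* (G : Type u) ⧸ K := QuotientGroup.mk' K
  have hker : π.ker ≤ φ.ker := by
    rw [← hrk, QuotientGroup.ker_mk']
    have hmap : Subgroup.map ι ⊤ ≤ socle (A : Type u) (G : Type u) := by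
      rw [← hN]; exact socle_map_le ι
    rw [MonoidHom.range_eq_map, ← hsoc]
    exact hmap
  let ψ : (Q : Type u) →* (G : Type u) ⧸ K := (π.liftOfSurjective hπ) ⟨φ, hker⟩
  have hψπ : ∀ g : G, ψ (π g) = φ g := fun g =>
    MonoidHom.liftOfRightInverse_comp_apply π _ (Function.rightInverse_surjInv hπ)
      ⟨φ, hker⟩ g
  have hψtriv : ∀ q : Q, ψ q = 1 := by
    have hle : socle (A : Type u) (Q : Type u) ≤ ψ.ker := by
      refine iSup_le fun f => ?_
      rintro x ⟨a, ha⟩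
      have ht := hom_to_quotient_radical_trivial (A := (A : Type u)) (ψ.comp f)
      have ht' := congrArg (fun h : (A : Type u) →* (G : Type u) ⧸ K => h a) ht
      simp only [MonoidHom.comp_apply, MonoidHom.one_apply] at ht'
      show ψ x = 1
      rw [← ha]; exact ht'
    rw [hQ, top_le_iff] at hle
    intro q
    have hq : q ∈ ψ.ker := by rw [hle]; trivial
    exact hq
  rw [hsoc, ← top_le_iff]
  intro g _
  have hg : φ g = 1 := by rw [← hψπ g]; exact hψtriv (π g)
  exact (QuotientGroup.eq_one_iff g).mp hg

/-- If `C(A) = C_q(A)` and `S_A G = T_A G` for every group `G`, then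
`C(A) = C̄(A)`. -/
theorem stmt16 (A : GrpCat.{u})
    (h1 : ∀ G : GrpCat.{u}, cellClass A G ↔ socClass A G)
    (h2 : ∀ G : GrpCat.{u},
      socle (A : Type u) (G : Type u) = radical (A : Type u) (G : Type u)) :
    ∀ G : GrpCat.{u}, cellClass A G ↔ acyclClass A G := by
  intro G
  constructor
  · intro h C hiso hcolim _hext hA
    exact h C hiso hcolim hA
  · intro h
    refine h (cellClass A) ?_ ?_ ?_ (fun C _ _ hA => hA)
    · intro G H e hG C hiso hcolim hA
      exact hiso e (hG C hiso hcolim hA)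
    · intro J _ F c hc hobj C hiso hcolim hA
      exact hcolim J F c hc (fun j => hobj j C hiso hcolim hA)
    · intro N G' Q ι π hι hπ hrk hN hQ
      rw [cellClass_iff_socle A h1] at hN hQ ⊢
      exact socle_ext A h2 N G' Q ι π hπ hrk hN hQ
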